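/- For each sign vector ε = (ε_1,…,ε_5) ∈ {±1}^5, let L_ε ⊆ ℚ^6 be the 2-dimensional subspace spanned by (0, ε_1, ε_2, ε_3, ε_4, ε_5) and (1, 1·ε_1, 2·ε_2, 3·ε_3, 4·ε_4, 5·ε_5) (so that L_ε is the affine cone over the line x_i = ε_i(t+i) on the Büchi K3 surface X₅). Then for distinct ε, δ ∈ {±1}^5 the corresponding projective lines meet, i.e., L_ε ∩ L_δ ≠ {0}, if and only if ε and δ differ in exactly one coordinate or in all five coordinates. In particular, the intersection graph of the 32 lines on X₅ is bipartite of type (16,16) and regular of valence 6. -/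
import Mathlib


/-- The direction vector `(0, ε₁, ε₂, ε₃, ε₄, ε₅)` of the line `L_ε` on the
Büchi K3 surface `X₅`. -/
def buchiLineDir (ε : Fin 5 → ℚ) : Fin 6 → ℚ :=
  ![0, ε 0, ε 1, ε 2, ε 3, ε 4]

/-- The point `(1, 1·ε₁, 2·ε₂, 3·ε₃, 4·ε₄, 5·ε₅)` of the line `L_ε` on the
Büchi K3 surface `X₅`. -/
def buchiLinePt (ε : Fin 5 → ℚ) : Fin 6 → ℚ :=
  ![1, 1 * ε 0, 2 * ε 1, 3 * ε 2, 4 * ε 3, 5 * ε 4]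

/-- The affine cone `L_ε ⊆ ℚ⁶` over the line `x_i = ε_i(t + i)` of the Büchi
K3 surface `X₅`. -/
def buchiLine (ε : Fin 5 → ℚ) : Submodule ℚ (Fin 6 → ℚ) :=
  Submodule.span ℚ {buchiLineDir ε, buchiLinePt ε}

lemma buchiLineDir_zero (ε : Fin 5 → ℚ) : buchiLineDir ε 0 = 0 := rfl

lemma buchiLinePt_zero (ε : Fin 5 → ℚ) : buchiLinePt ε 0 = 1 := rfl

lemma buchiLineDir_succ (ε : Fin 5 → ℚ) (k : Fin 5) :
    buchiLineDir ε k.succ = ε k := by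
  fin_cases k <;> rfl

lemma buchiLinePt_succ (ε : Fin 5 → ℚ) (k : Fin 5) :
    buchiLinePt ε k.succ = (((k : ℕ) : ℚ) + 1) * ε k := by
  fin_cases k <;> norm_num [buchiLinePt] <;> rfl

open scoped Classical in
/-- Two distinct lines `L_ε`, `L_δ` (with `ε, δ ∈ {±1}⁵`) of the Büchi K3
surface `X₅` meet (i.e. the cones `L_ε` and `L_δ` intersect nontrivially) if
and only if `ε` and `δ` differ in exactly one coordinate or in all five
coordinates.  In particular the intersection graph of the `32` lines of `X₅`
is bipartite of type `(16,16)` and regular of valence `6`. -/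
theorem buchi_lines_intersection (ε δ : Fin 5 → ℚ)
    (hε : ∀ i, ε i = 1 ∨ ε i = -1) (hδ : ∀ i, δ i = 1 ∨ δ i = -1)
    (hne : ε ≠ δ) :
    buchiLine ε ⊓ buchiLine δ ≠ ⊥ ↔
      ((Finset.univ.filter (fun i : Fin 5 => ε i ≠ δ i)).card = 1 ∨
       (Finset.univ.filter (fun i : Fin 5 => ε i ≠ δ i)).card = 5) := by
  rw [Submodule.ne_bot_iff]
  constructor
  · rintro ⟨v, hv, hv0⟩
    rw [Submodule.mem_inf] at hv
    obtain ⟨hvε, hvδ⟩ := hv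
    rw [buchiLine, Submodule.mem_span_pair] at hvε hvδ
    obtain ⟨a, b, hab⟩ := hvε
    obtain ⟨c, d, hcd⟩ := hvδ
    have E : a • buchiLineDir ε + b • buchiLinePt ε
        = c • buchiLineDir δ + d • buchiLinePt δ := hab.trans hcd.symm
    have hbd : b = d := by
      have := congrFun E 0
      simpa [buchiLineDir_zero, buchiLinePt_zero] using this
    subst hbd
    have eqk : ∀ k : Fin 5,
        a * ε k + b * ((((k : ℕ) : ℚ) + 1) * ε k)
          = c * δ k + b * ((((k : ℕ) : ℚ) + 1) * δ k) := by
      intro k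
      have := congrFun E k.succ
      simpa [buchiLineDir_succ, buchiLinePt_succ] using this
    by_contra hcard
    push_neg at hcard
    obtain ⟨h1, h5⟩ := hcard
    set S := Finset.univ.filter (fun i : Fin 5 => ε i ≠ δ i) with hS
    -- S is nonempty
    have hSne : S.Nonempty := by
      rw [Function.ne_iff] at hne
      obtain ⟨i, hi⟩ := hne
      exact ⟨i, by simp [hS, hi]⟩
    have h2le : 2 ≤ S.card := by
      have := Finset.Nonempty.card_pos hSne
      omega
    obtain ⟨i, hiS, j, hjS, hij⟩ := Finset.one_lt_card.mp h2le
    -- there is a coordinate where they agree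
    have hSneq : S ≠ Finset.univ := by
      intro h
      apply h5
      rw [hS] at h ⊢
      rw [h]
      simp
    obtain ⟨k0, hk0⟩ : ∃ k0, k0 ∉ S := by
      by_contra hco
      push_neg at hco
      exact hSneq (Finset.eq_univ_iff_forall.mpr hco)
    have hk0eq : ε k0 = δ k0 := by
      by_contra h
      exact hk0 (by simp [hS, h])
    have hiD : ε i ≠ δ i := by
      have := Finset.mem_filter.mp (hS ▸ hiS)
      exact this.2
    have hjD : ε j ≠ δ j := by
      have := Finset.mem_filter.mp (hS ▸ hjS)
      exact this.2
    -- a = c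
    have hac : a = c := by
      have h := eqk k0
      rw [hk0eq] at h
      rcases hδ k0 with h0 | h0 <;> rw [h0] at h <;> linarith
    -- differing coordinate equations
    have key : ∀ m : Fin 5, ε m ≠ δ m →
        a + c + 2 * b * (((m : ℕ) : ℚ) + 1) = 0 := by
      intro m hm
      have h := eqk m
      rcases hε m with h0 | h0 <;> rcases hδ m with h0' | h0'
      · exact absurd (h0.trans h0'.symm) hm
      · rw [h0, h0'] at h; linarith
      · rw [h0, h0'] at h; linarith
      · exact absurd (h0.trans h0'.symm) hm
    have hi' := key i hiD
    have hj' := key j hjD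
    have hijQ : ((i : ℕ) : ℚ) ≠ ((j : ℕ) : ℚ) := by
      intro h
      exact hij (Fin.ext (Nat.cast_injective h))
    have hb : b = 0 := by
      by_contra hb
      apply hijQ
      have : 2 * b * (((i : ℕ) : ℚ) + 1) = 2 * b * (((j : ℕ) : ℚ) + 1) := by
        linarith
      have h2b : (2 : ℚ) * b ≠ 0 := by
        intro h; apply hb; linarith [mul_eq_zero.mp h]
      field_simp at this
      rcases mul_eq_zero.mp (by linarith : 2 * b * ((((i : ℕ) : ℚ) + 1) - (((j : ℕ) : ℚ) + 1)) = 0) with h | h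
      · exact absurd h h2b
      · linarith
    have ha : a = 0 := by
      rw [hb, hac] at hi'
      linarith
    apply hv0
    rw [← hab, ha, hb]
    simp
  · rintro (h1 | h5)
    · obtain ⟨i, hi⟩ := Finset.card_eq_one.mp h1
      have hiD : ε i ≠ δ i := by
        have : i ∈ Finset.univ.filter (fun i : Fin 5 => ε i ≠ δ i) := by
          rw [hi]; exact Finset.mem_singleton_self i
        exact (Finset.mem_filter.mp this).2
      have heq : ∀ k : Fin 5, k ≠ i → ε k = δ k := by
        intro k hk
        by_contra h
        have : k ∈ Finset.univ.filter (fun i : Fin 5 => ε i ≠ δ i) := by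
          simp [h]
        rw [hi, Finset.mem_singleton] at this
        exact hk this
      refine ⟨(-(((i : ℕ) : ℚ) + 1)) • buchiLineDir ε + buchiLinePt ε, ?_, ?_⟩
      · rw [Submodule.mem_inf]
        constructor
        · rw [buchiLine, Submodule.mem_span_pair]
          exact ⟨-(((i : ℕ) : ℚ) + 1), 1, by simp⟩
        · rw [buchiLine, Submodule.mem_span_pair]
          refine ⟨-(((i : ℕ) : ℚ) + 1), 1, ?_⟩
          rw [one_smul]
          funext m
          refine Fin.cases ?_ ?_ m
          · simp [buchiLineDir_zero, buchiLinePt_zero]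
          · intro k
            simp only [Pi.add_apply, Pi.smul_apply, buchiLineDir_succ,
              buchiLinePt_succ, smul_eq_mul]
            rcases eq_or_ne k i with hk | hk
            · subst hk; ring
            · rw [heq k hk]
      · intro h
        have := congrFun h 0
        simp [buchiLineDir_zero, buchiLinePt_zero] at this
    · have hall : ∀ k : Fin 5, δ k = -ε k := by
        have huniv : Finset.univ.filter (fun i : Fin 5 => ε i ≠ δ i)
            = Finset.univ := by
          apply Finset.eq_univ_of_card
          simpa using h5
        intro k
        have hk : ε k ≠ δ k := by
          have : k ∈ Finset.univ.filter (fun i : Fin 5 => ε i ≠ δ i) := by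
            rw [huniv]; exact Finset.mem_univ k
          exact (Finset.mem_filter.mp this).2
        rcases hε k with h0 | h0 <;> rcases hδ k with h0' | h0'
        · exact absurd (h0.trans h0'.symm) hk
        · rw [h0, h0']; try norm_num
        · rw [h0, h0']; try norm_num
        · exact absurd (h0.trans h0'.symm) hk
      refine ⟨buchiLineDir ε, ?_, ?_⟩
      · rw [Submodule.mem_inf]
        constructor
        · rw [buchiLine, Submodule.mem_span_pair]
          exact ⟨1, 0, by simp⟩
        · rw [buchiLine, Submodule.mem_span_pair]
          refine ⟨-1, 0, ?_⟩
          funext m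
          refine Fin.cases ?_ ?_ m
          · simp [buchiLineDir_zero]
          · intro k
            simp [buchiLineDir_succ, hall k]
      · intro h
        have := congrFun h (Fin.succ 0)
        rw [buchiLineDir_succ] at this
        rcases hε 0 with h0 | h0 <;> rw [h0] at this <;> simp at this
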